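/- Let d be a positive integer and let (X, Y) be a random pair with values in ℝ^d × {−1, 1} with law P. Let λ > 0, σ > 0, and B ≥ 0, and assume the anti-concentration condition: for every unit vector v ∈ ℝ^d, P(|⟨v, X⟩| ≤ λσ) ≤ Bλ. Fix w ∈ ℝ^d and assume E[(1 − Y⟨w, X⟩)₊] < ∞. Let w_P be the projection of w onto the Euclidean ball of radius 1/(λσ), i.e., w_P = w if ‖w‖ ≤ 1/(λσ) and w_P = (1/(λσ‖w‖)) w otherwise. Then E[(1 − Y⟨w_P, X⟩)₊] ≤ E[(1 − Y⟨w, X⟩)₊] + 2Bλ. -/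

import Mathlib

open MeasureTheory
open scoped InnerProductSpace

/-- **Clipping of `w` for hinge loss.** Under the anti-concentration condition
`P(|⟨v, X⟩| ≤ λσ) ≤ Bλ` for all unit vectors `v`, projecting `w` onto the
Euclidean ball of radius `1/(λσ)` increases the expected hinge loss by at most
`2Bλ`. -/
theorem hinge_loss_clipping
    (Ω : Type*) [MeasurableSpace Ω] (P : Measure Ω) [IsProbabilityMeasure P]
    (d : ℕ) (hd : 0 < d)
    (X : Ω → EuclideanSpace ℝ (Fin d)) (hX : Measurable X)
    (Y : Ω → ℝ) (hYmeas : Measurable Y) (hY : ∀ ω, Y ω = -1 ∨ Y ω = 1)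
    (lam σ B : ℝ) (hlam : 0 < lam) (hσ : 0 < σ) (hB : 0 ≤ B)
    (hanti : ∀ v : EuclideanSpace ℝ (Fin d), ‖v‖ = 1 →
      (P {ω | |⟪v, X ω⟫_ℝ| ≤ lam * σ}).toReal ≤ B * lam)
    (w : EuclideanSpace ℝ (Fin d))
    (hint : Integrable (fun ω => max (1 - Y ω * ⟪w, X ω⟫_ℝ) 0) P)
    (wP : EuclideanSpace ℝ (Fin d))
    (hwP : wP = if ‖w‖ ≤ 1 / (lam * σ) then w else (1 / (lam * σ * ‖w‖)) • w) :
    (∫ ω, max (1 - Y ω * ⟪wP, X ω⟫_ℝ) 0 ∂P) ≤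
      (∫ ω, max (1 - Y ω * ⟪w, X ω⟫_ℝ) 0 ∂P) + 2 * B * lam := by
  by_cases hcase : ‖w‖ ≤ 1 / (lam * σ)
  · rw [hwP, if_pos hcase]
    have h2 : 0 ≤ 2 * B * lam := by positivity
    linarith
  · rw [hwP, if_neg hcase]
    push_neg at hcase
    have hls : 0 < lam * σ := mul_pos hlam hσ
    have hw0 : 0 < ‖w‖ := lt_trans (by positivity) hcase
    set c : ℝ := 1 / (lam * σ * ‖w‖) with hc
    have hc0 : 0 < c := by positivity
    have hprod : 1 < lam * σ * ‖w‖ := by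
      have := (div_lt_iff₀ hls).mp hcase
      nlinarith
    have hc1 : c ≤ 1 := by
      rw [hc, div_le_one (by linarith)]; linarith
    set v : EuclideanSpace ℝ (Fin d) := ‖w‖⁻¹ • w with hv
    have hvnorm : ‖v‖ = 1 := by
      rw [hv, norm_smul, norm_inv, norm_norm, inv_mul_cancel₀ (ne_of_gt hw0)]
    set E : Set Ω := {ω | |⟪v, X ω⟫_ℝ| ≤ lam * σ} with hE
    have hinner_meas : ∀ a : EuclideanSpace ℝ (Fin d),
        Measurable (fun ω => ⟪a, X ω⟫_ℝ) := fun a =>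
      ((innerSL ℝ a).continuous.measurable).comp hX
    have hEmeas : MeasurableSet E := by
      apply measurableSet_le ((hinner_meas v).abs) measurable_const
    -- membership in E rephrased
    have hEmem : ∀ ω, ω ∈ E ↔ |⟪w, X ω⟫_ℝ| ≤ lam * σ * ‖w‖ := by
      intro ω
      have : ⟪v, X ω⟫_ℝ = ‖w‖⁻¹ * ⟪w, X ω⟫_ℝ := by
        rw [hv, real_inner_smul_left]
      rw [hE]
      simp only [Set.mem_setOf_eq, this, abs_mul, abs_inv, abs_norm]
      rw [inv_mul_le_iff₀ hw0]
      constructor <;> intro h <;> nlinarith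
    -- pointwise bound
    have hpt : ∀ ω, max (1 - Y ω * ⟪c • w, X ω⟫_ℝ) 0 ≤
        max (1 - Y ω * ⟪w, X ω⟫_ℝ) 0 + E.indicator (fun _ => (2:ℝ)) ω := by
      intro ω
      have hY1 : |Y ω| = 1 := by rcases hY ω with h | h <;> simp [h]
      have hsm : ⟪c • w, X ω⟫_ℝ = c * ⟪w, X ω⟫_ℝ := real_inner_smul_left _ _ _
      set t : ℝ := Y ω * ⟪w, X ω⟫_ℝ with ht
      have habst : |t| = |⟪w, X ω⟫_ℝ| := by rw [ht, abs_mul, hY1, one_mul]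
      have hct : Y ω * ⟪c • w, X ω⟫_ℝ = c * t := by rw [hsm, ht]; ring
      rw [hct]
      by_cases hmem : ω ∈ E
      · have hind : E.indicator (fun _ => (2:ℝ)) ω = 2 := Set.indicator_of_mem hmem _
        rw [hind]
        have habs : |t| ≤ lam * σ * ‖w‖ := habst ▸ (hEmem ω).mp hmem
        have h1 : c * |t| ≤ 1 := by
          have : c * |t| ≤ c * (lam * σ * ‖w‖) := by
            apply mul_le_mul_of_nonneg_left habs (le_of_lt hc0)
          rw [hc] at this
          calc c * |t| ≤ 1 / (lam * σ * ‖w‖) * (lam * σ * ‖w‖) := this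
            _ = 1 := by field_simp
        have h2 : -1 ≤ c * t := by
          have := neg_abs_le t
          nlinarith [abs_nonneg t, mul_le_mul_of_nonneg_left (neg_abs_le t) (le_of_lt hc0)]
        have hmax : 0 ≤ max (1 - t) 0 := le_max_right _ _
        apply max_le <;> linarith
      · have hind : E.indicator (fun _ => (2:ℝ)) ω = 0 := Set.indicator_of_notMem hmem _
        rw [hind, add_zero]
        have habs : lam * σ * ‖w‖ < |t| := by
          rw [habst]; exact lt_of_not_ge (fun h => hmem ((hEmem ω).mpr h))
        rcases le_or_gt t 0 with htneg | htpos
        · -- t ≤ 0 : c*t ≥ t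
          have : t ≤ c * t := by nlinarith
          apply max_le _ (le_max_right _ _)
          calc 1 - c * t ≤ 1 - t := by linarith
            _ ≤ max (1 - t) 0 := le_max_left _ _
        · -- t > 0 large: c*t > 1
          have habs' : lam * σ * ‖w‖ < t := by rwa [abs_of_pos htpos] at habs
          have : 1 < c * t := by
            rw [hc]
            calc 1 = 1 / (lam * σ * ‖w‖) * (lam * σ * ‖w‖) := by field_simp
              _ < 1 / (lam * σ * ‖w‖) * t := by
                  apply mul_lt_mul_of_pos_left habs' (by positivity)
          apply max_le _ (le_max_right _ _)
          have : (1 : ℝ) - c * t < 0 := by linarith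
          calc 1 - c * t ≤ 0 := le_of_lt this
            _ ≤ max (1 - t) 0 := le_max_right _ _
    -- integrability
    have hind_int : Integrable (E.indicator (fun _ => (2:ℝ))) P :=
      (integrable_const (2:ℝ)).indicator hEmeas
    have hg_int : Integrable
        (fun ω => max (1 - Y ω * ⟪w, X ω⟫_ℝ) 0 + E.indicator (fun _ => (2:ℝ)) ω) P :=
      hint.add hind_int
    have hf_meas : AEStronglyMeasurable
        (fun ω => max (1 - Y ω * ⟪c • w, X ω⟫_ℝ) 0) P := by
      exact ((measurable_const.sub (hYmeas.mul (hinner_meas (c • w)))).max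
        measurable_const).aestronglyMeasurable
    have hf_int : Integrable (fun ω => max (1 - Y ω * ⟪c • w, X ω⟫_ℝ) 0) P := by
      apply Integrable.mono' hg_int hf_meas
      filter_upwards with ω
      rw [Real.norm_eq_abs, abs_of_nonneg (le_max_right _ _)]
      exact hpt ω
    have hle : (∫ ω, max (1 - Y ω * ⟪c • w, X ω⟫_ℝ) 0 ∂P) ≤
        ∫ ω, (max (1 - Y ω * ⟪w, X ω⟫_ℝ) 0 + E.indicator (fun _ => (2:ℝ)) ω) ∂P :=
      integral_mono hf_int hg_int hpt
    have hsplit : (∫ ω, (max (1 - Y ω * ⟪w, X ω⟫_ℝ) 0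
        + E.indicator (fun _ => (2:ℝ)) ω) ∂P)
        = (∫ ω, max (1 - Y ω * ⟪w, X ω⟫_ℝ) 0 ∂P) + (P E).toReal * 2 := by
      rw [integral_add hint hind_int, integral_indicator_const _ hEmeas]
      simp [smul_eq_mul, Measure.real]
    have hP : (P E).toReal ≤ B * lam := hanti v hvnorm
    calc (∫ ω, max (1 - Y ω * ⟪c • w, X ω⟫_ℝ) 0 ∂P)
        ≤ (∫ ω, max (1 - Y ω * ⟪w, X ω⟫_ℝ) 0 ∂P) + (P E).toReal * 2 := by
          rw [← hsplit]; exact hle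
      _ ≤ (∫ ω, max (1 - Y ω * ⟪w, X ω⟫_ℝ) 0 ∂P) + 2 * B * lam := by nlinarith
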